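/- Post's Completeness Theorem. A set F of Boolean functions (finitary operations on the two-element set {0,1}) is complete if and only if there exist not necessarily distinct functions f₁,…,f₅ ∈ F such that: f₁ is not monotone with respect to the order 0 ≤ 1 (i.e. f₁ does not preserve the coordinatewise order); f₂ does not satisfy f₂(0,…,0) = 0; f₃ does not satisfy f₃(1,…,1) = 1; f₄ is not self-dual, i.e. f₄ is not invariant under switching the roles of 0 and 1 (there is a tuple (a₁,…,aₙ) with f₄(¬a₁,…,¬aₙ) ≠ ¬f₄(a₁,…,aₙ)); and f₅ is not linear, i.e. f₅ cannot be written in the form c₀ + c₁x₁ + ⋯ + cₙxₙ over the two-element field Z₂. -/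

import Mathlib

universe u

/-- The type of finitary operations (of positive arity `n + 1`) on `A`. -/
abbrev Ops (A : Type u) : Type u := Σ n : ℕ, (Fin (n + 1) → A) → A

/-- A set of finitary operations on `A` is a clone if it contains all projection
operations and is closed under composition. -/
def IsClone {A : Type u} (C : Set (Ops A)) : Prop :=
  (∀ (n : ℕ) (i : Fin (n + 1)), (⟨n, fun x => x i⟩ : Ops A) ∈ C) ∧
  ∀ (n m : ℕ) (f : (Fin (n + 1) → A) → A) (g : Fin (n + 1) → (Fin (m + 1) → A) → A),
    (⟨n, f⟩ : Ops A) ∈ C → (∀ i, (⟨m, g i⟩ : Ops A) ∈ C) →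
    (⟨m, fun x => f fun i => g i x⟩ : Ops A) ∈ C

/-- The clone generated by a set `F` of operations: the least clone containing `F`. -/
def cloneGen {A : Type u} (F : Set (Ops A)) : Set (Ops A) :=
  ⋂₀ {C : Set (Ops A) | IsClone C ∧ F ⊆ C}

/-- The clone of all projection operations on `A`. -/
def projClone (A : Type u) : Set (Ops A) :=
  {f : Ops A | ∃ i : Fin (f.1 + 1), f.2 = fun x => x i}

/-- A clone `M` is maximal if it is a proper subclone of the clone of all operations
and the clone of all operations is the only clone properly containing it. -/
def IsMaximalClone {A : Type u} (M : Set (Ops A)) : Prop :=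
  IsClone M ∧ M ≠ Set.univ ∧
    ∀ D : Set (Ops A), IsClone D → M ⊆ D → D = M ∨ D = Set.univ

/-- A clone `C` is minimal if the clone of projections is its unique proper subclone. -/
def IsMinimalClone {A : Type u} (C : Set (Ops A)) : Prop :=
  IsClone C ∧ C ≠ projClone A ∧
    ∀ D : Set (Ops A), IsClone D → D ⊆ C → D = projClone A ∨ D = C

/-- An `n`-ary operation `f` preserves a `k`-ary relation `ρ` if applying `f`
coordinatewise to tuples from `ρ` always yields a tuple in `ρ`. -/
def Preserves {A : Type u} {n k : ℕ} (f : (Fin n → A) → A) (ρ : Set (Fin k → A)) : Prop :=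
  ∀ t : Fin n → Fin k → A, (∀ i, t i ∈ ρ) → (fun j => f fun i => t i j) ∈ ρ

/-- `Pol ρ` is the clone of all operations preserving the relation `ρ`. -/
def Pol {A : Type u} {k : ℕ} (ρ : Set (Fin k → A)) : Set (Ops A) :=
  {f : Ops A | Preserves f.2 ρ}

/-- The order `0 ≤ 1` on the two-element set `ZMod 2`. -/
def BoolLe (a b : ZMod 2) : Prop := a = b ∨ (a = 0 ∧ b = 1)

namespace PostAux

abbrev B := ZMod 2

lemma btwo : ∀ a : B, a = 0 ∨ a = 1 := by decide
lemma bne0 : ∀ a : B, a ≠ 0 → a = 1 := by decide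
lemma bne1 : ∀ a : B, a ≠ 1 → a = 0 := by decide
lemma bne_succ : ∀ a b : B, a ≠ b + 1 → a = b := by decide
lemma bne_add : ∀ a b : B, a ≠ b → a + b = 1 := by decide

variable {C : Set (Ops B)}

lemma mem_congr {n : ℕ} {p p' : (Fin (n+1) → B) → B}
    (h : (⟨n, p⟩ : Ops B) ∈ C) (he : ∀ x, p x = p' x) : (⟨n, p'⟩ : Ops B) ∈ C := by
  have hpe : p = p' := funext he
  rwa [hpe] at h

lemma unary_comp (hC : IsClone C) {u : (Fin 1 → B) → B} {m : ℕ} {g : (Fin (m+1) → B) → B}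
    (hu : (⟨0, u⟩ : Ops B) ∈ C) (hg : (⟨m, g⟩ : Ops B) ∈ C) :
    (⟨m, fun x => u (fun _ => g x)⟩ : Ops B) ∈ C :=
  hC.2 0 m u (fun _ => g) hu (fun _ => hg)

lemma diag_mem (hC : IsClone C) {n : ℕ} {f : (Fin (n+1) → B) → B}
    (h : (⟨n, f⟩ : Ops B) ∈ C) : (⟨0, fun t => f (fun _ => t 0)⟩ : Ops B) ∈ C :=
  hC.2 n 0 f (fun _ => fun t => t 0) h (fun _ => hC.1 0 0)

lemma const_mem (hC : IsClone C) {a : B} (h : (⟨0, fun _ => a⟩ : Ops B) ∈ C) (m : ℕ) :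
    (⟨m, fun _ => a⟩ : Ops B) ∈ C :=
  unary_comp hC h (hC.1 m 0)

lemma neg_comp (hC : IsClone C) (hneg : (⟨0, fun t => t 0 + 1⟩ : Ops B) ∈ C)
    {m : ℕ} {g : (Fin (m+1) → B) → B} (hg : (⟨m, g⟩ : Ops B) ∈ C) :
    (⟨m, fun x => g x + 1⟩ : Ops B) ∈ C :=
  unary_comp hC hneg hg

lemma mul_mem (hC : IsClone C) (hand : (⟨1, fun t : Fin 2 → B => t 0 * t 1⟩ : Ops B) ∈ C)
    {m : ℕ} {g h' : (Fin (m+1) → B) → B} (hg : (⟨m, g⟩ : Ops B) ∈ C)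
    (hh : (⟨m, h'⟩ : Ops B) ∈ C) :
    (⟨m, fun x => g x * h' x⟩ : Ops B) ∈ C := by
  have key := hC.2 1 m (fun t => t 0 * t 1)
    (fun i => if i.val = 0 then g else h') hand ?_
  · apply mem_congr key; intro x; norm_num
  · intro i
    fin_cases i
    · simpa using hg
    · simpa using hh

lemma isClone_cloneGen (F : Set (Ops B)) : IsClone (cloneGen F) := by
  constructor
  · intro n i
    rw [cloneGen, Set.mem_sInter]
    rintro S ⟨hS, _⟩; exact hS.1 n i
  · intro n m f g hf hg
    rw [cloneGen, Set.mem_sInter]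
    rintro S ⟨hS, hFS⟩
    refine hS.2 n m f g ?_ ?_
    · exact Set.mem_sInter.mp hf S ⟨hS, hFS⟩
    · intro i; exact Set.mem_sInter.mp (hg i) S ⟨hS, hFS⟩

lemma subset_cloneGen (F : Set (Ops B)) : F ⊆ cloneGen F :=
  fun f hf => Set.mem_sInter.mpr fun _ hS => hS.2 hf

end PostAux
namespace PostAux

def MonoC : Set (Ops B) :=
  {f | ∀ x y, (∀ i, BoolLe (x i) (y i)) → BoolLe (f.2 x) (f.2 y)}

lemma isClone_MonoC : IsClone MonoC := by
  constructor
  · intro n i x y h; exact h i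
  · intro n m f g hf hg x y h
    exact hf _ _ (fun i => hg i x y h)

lemma neg_not_mono : (⟨0, fun t => t 0 + 1⟩ : Ops B) ∉ MonoC := by
  intro h
  have := h (fun _ => 0) (fun _ => 1) (fun _ => Or.inr ⟨rfl, rfl⟩)
  rcases this with h' | ⟨h', _⟩
  · exact absurd h' (by decide)
  · exact absurd h' (by decide)

def T0C : Set (Ops B) := {f | f.2 (fun _ => 0) = 0}

lemma isClone_T0C : IsClone T0C := by
  constructor
  · intro n i; rfl
  · intro n m f g hf hg
    show f (fun i => g i (fun _ => 0)) = 0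
    have : (fun i => g i (fun _ => (0:B))) = fun _ => (0:B) := funext fun i => hg i
    rw [this]; exact hf

lemma c1_not_T0 : (⟨0, fun _ => (1:B)⟩ : Ops B) ∉ T0C := by
  intro h; exact one_ne_zero h

def T1C : Set (Ops B) := {f | f.2 (fun _ => 1) = 1}

lemma isClone_T1C : IsClone T1C := by
  constructor
  · intro n i; rfl
  · intro n m f g hf hg
    show f (fun i => g i (fun _ => 1)) = 1
    have : (fun i => g i (fun _ => (1:B))) = fun _ => (1:B) := funext fun i => hg i
    rw [this]; exact hf

lemma c0_not_T1 : (⟨0, fun _ => (0:B)⟩ : Ops B) ∉ T1C := by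
  intro h; exact zero_ne_one h

def SDC : Set (Ops B) := {f | ∀ x, f.2 (fun i => x i + 1) = f.2 x + 1}

lemma isClone_SDC : IsClone SDC := by
  constructor
  · intro n i x; rfl
  · intro n m f g hf hg x
    show f (fun i => g i (fun j => x j + 1)) = f (fun i => g i x) + 1
    have : (fun i => g i (fun j => x j + 1)) = fun i => (g i x) + 1 :=
      funext fun i => hg i x
    rw [this]; exact hf (fun i => g i x)

lemma c0_not_SD : (⟨0, fun _ => (0:B)⟩ : Ops B) ∉ SDC := by
  intro h
  have := h (fun _ => 0)
  exact absurd this (by decide)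

def LinC : Set (Ops B) :=
  {f | ∃ (c : B) (coef : Fin (f.1 + 1) → B), ∀ x, f.2 x = c + ∑ i, coef i * x i}

lemma isClone_LinC : IsClone LinC := by
  constructor
  · intro n i
    refine ⟨0, fun j => if j = i then 1 else 0, fun x => ?_⟩
    simp [ite_mul, Finset.sum_ite_eq']
  · rintro n m f g ⟨c, coef, hf⟩ hg
    dsimp only at hf hg ⊢
    choose d e hge using hg
    dsimp only at hge
    refine ⟨c + ∑ i, coef i * d i, fun j => ∑ i, coef i * e i j, fun x => ?_⟩
    dsimp only
    rw [hf (fun i => g i x)]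
    simp only [hge]
    simp only [mul_add, Finset.sum_add_distrib, Finset.mul_sum, Finset.sum_mul, mul_assoc,
      add_assoc]
    rw [Finset.sum_comm]

lemma and_not_Lin : (⟨1, fun t : Fin 2 → B => t 0 * t 1⟩ : Ops B) ∉ LinC := by
  rintro ⟨c, coef, h⟩
  have h00 := h ![0, 0]
  have h10 := h ![1, 0]
  have h01 := h ![0, 1]
  have h11 := h ![1, 1]
  simp [Fin.sum_univ_two] at h00 h10 h01 h11
  have : (1 : B) = 0 := by linear_combination h11 - h10 - h01 + h00
  exact one_ne_zero this

end PostAux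
namespace PostAux

variable {C : Set (Ops B)}

lemma neg_of_nonmono_aux (hC : IsClone C)
    (h0 : (⟨0, fun _ => (0:B)⟩ : Ops B) ∈ C) (h1 : (⟨0, fun _ => (1:B)⟩ : Ops B) ∈ C)
    (k : ℕ) : ∀ {n : ℕ} {f : (Fin (n+1) → B) → B} (x y : Fin (n+1) → B),
    (Finset.univ.filter (fun i => x i ≠ y i)).card ≤ k →
    (⟨n, f⟩ : Ops B) ∈ C → (∀ i, BoolLe (x i) (y i)) → f x = 1 → f y = 0 →
    (⟨0, fun t => t 0 + 1⟩ : Ops B) ∈ C := by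
  induction k with
  | zero =>
    intro n f x y hcard hf hxy hx hy
    exfalso
    have hxyeq : x = y := by
      funext i
      by_contra hne
      have hmem : i ∈ Finset.univ.filter (fun i => x i ≠ y i) := by simp [hne]
      have := Finset.card_pos.mpr ⟨i, hmem⟩
      omega
    rw [hxyeq, hy] at hx
    exact absurd hx (by decide)
  | succ k ih =>
    intro n f x y hcard hf hxy hx hy
    have hxyne : x ≠ y := by
      intro h; rw [h, hy] at hx; exact absurd hx (by decide)
    obtain ⟨i, hi⟩ : ∃ i, x i ≠ y i := by
      by_contra h; push_neg at h; exact hxyne (funext h)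
    have hxi : x i = 0 ∧ y i = 1 := by
      rcases hxy i with h | h
      · exact absurd h hi
      · exact h
    by_cases hfz : f (Function.update x i 1) = 0
    · -- build negation from coordinate i
      have hmem : (⟨0, fun t => f (fun j => if j = i then t 0 else x j)⟩ : Ops B) ∈ C := by
        refine hC.2 n 0 f (fun j => fun t => if j = i then t 0 else x j) hf ?_
        intro j
        by_cases hji : j = i
        · exact mem_congr (hC.1 0 0) (fun t => by simp [hji])
        · rcases btwo (x j) with h | h
          · exact mem_congr h0 (fun t => by simp [hji, h])
          · exact mem_congr h1 (fun t => by simp [hji, h])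
      refine mem_congr hmem (fun t => ?_)
      rcases btwo (t 0) with h | h
      · have hv : (fun j => if j = i then t 0 else x j) = x := by
          funext j
          by_cases hji : j = i
          · simp [hji, h, hxi.1]
          · simp [hji]
        rw [hv, hx, h]; decide
      · have hv : (fun j => if j = i then t 0 else x j) = Function.update x i 1 := by
          funext j
          by_cases hji : j = i
          · subst hji; simp [h]
          · simp [hji, Function.update_of_ne hji]
        rw [hv, hfz, h]; decide
    · have hfz1 : f (Function.update x i 1) = 1 := bne0 _ hfz
      have hifilt : i ∈ Finset.univ.filter (fun j => x j ≠ y j) := by simp [hi]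
      have hsub : Finset.univ.filter (fun j => Function.update x i 1 j ≠ y j) ⊆
          (Finset.univ.filter (fun j => x j ≠ y j)).erase i := by
        intro j hj
        simp only [Finset.mem_filter, Finset.mem_erase, Finset.mem_univ, true_and] at hj ⊢
        by_cases hji : j = i
        · subst hji
          rw [Function.update_self, hxi.2] at hj
          exact absurd rfl hj
        · rw [Function.update_of_ne hji] at hj
          exact ⟨hji, hj⟩
      have hcard2 := Finset.card_le_card hsub
      rw [Finset.card_erase_of_mem hifilt] at hcard2
      have hpos := Finset.card_pos.mpr ⟨i, hifilt⟩
      refine ih (Function.update x i 1) y (by omega) hf ?_ hfz1 hy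
      intro j
      by_cases hji : j = i
      · subst hji
        rw [Function.update_self, hxi.2]
        exact Or.inl rfl
      · rw [Function.update_of_ne hji]
        exact hxy j

lemma neg_of_nonmono (hC : IsClone C)
    (h0 : (⟨0, fun _ => (0:B)⟩ : Ops B) ∈ C) (h1 : (⟨0, fun _ => (1:B)⟩ : Ops B) ∈ C)
    {n : ℕ} {f : (Fin (n+1) → B) → B} (hf : (⟨n, f⟩ : Ops B) ∈ C)
    (hnm : ¬ ∀ x y, (∀ i, BoolLe (x i) (y i)) → BoolLe (f x) (f y)) :
    (⟨0, fun t => t 0 + 1⟩ : Ops B) ∈ C := by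
  push_neg at hnm
  obtain ⟨x, y, hxy, hnb⟩ := hnm
  have hvals : f x = 1 ∧ f y = 0 := by
    rcases btwo (f x) with h | h <;> rcases btwo (f y) with h' | h'
    · exact absurd (Or.inl (h.trans h'.symm)) hnb
    · exact absurd (Or.inr ⟨h, h'⟩) hnb
    · exact ⟨h, h'⟩
    · exact absurd (Or.inl (h.trans h'.symm)) hnb
  exact neg_of_nonmono_aux hC h0 h1 _ x y le_rfl hf hxy hvals.1 hvals.2

end PostAux
namespace PostAux

variable {C : Set (Ops B)}

/-- From the four witnesses we obtain negation and both constants in the clone. -/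
lemma neg_and_consts (hC : IsClone C)
    {n1 : ℕ} {g1 : (Fin (n1+1) → B) → B} (m1 : (⟨n1, g1⟩ : Ops B) ∈ C)
    (p1 : ¬ ∀ x y, (∀ i, BoolLe (x i) (y i)) → BoolLe (g1 x) (g1 y))
    {n2 : ℕ} {g2 : (Fin (n2+1) → B) → B} (m2 : (⟨n2, g2⟩ : Ops B) ∈ C)
    (p2 : g2 (fun _ => 0) ≠ 0)
    {n3 : ℕ} {g3 : (Fin (n3+1) → B) → B} (m3 : (⟨n3, g3⟩ : Ops B) ∈ C)
    (p3 : g3 (fun _ => 1) ≠ 1)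
    {n4 : ℕ} {g4 : (Fin (n4+1) → B) → B} (m4 : (⟨n4, g4⟩ : Ops B) ∈ C)
    (p4 : ∃ x, g4 (fun i => x i + 1) ≠ g4 x + 1) :
    (⟨0, fun t => t 0 + 1⟩ : Ops B) ∈ C ∧ (⟨0, fun _ => (0:B)⟩ : Ops B) ∈ C ∧
      (⟨0, fun _ => (1:B)⟩ : Ops B) ∈ C := by
  have hg20 : g2 (fun _ => 0) = 1 := bne0 _ p2
  have hg31 : g3 (fun _ => 1) = 0 := bne1 _ p3
  have d2 : (⟨0, fun t => g2 (fun _ => t 0)⟩ : Ops B) ∈ C := diag_mem hC m2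
  have d3 : (⟨0, fun t => g3 (fun _ => t 0)⟩ : Ops B) ∈ C := diag_mem hC m3
  -- step 1: either negation, or both constants
  have step1 : (⟨0, fun t => t 0 + 1⟩ : Ops B) ∈ C ∨
      ((⟨0, fun _ => (0:B)⟩ : Ops B) ∈ C ∧ (⟨0, fun _ => (1:B)⟩ : Ops B) ∈ C) := by
    rcases btwo (g2 (fun _ => 1)) with hg21 | hg21
    · left
      refine mem_congr d2 (fun t => ?_)
      rcases btwo (t 0) with h | h <;> rw [h]
      · rw [hg20]; decide
      · rw [hg21]; decide
    · rcases btwo (g3 (fun _ => 0)) with hg30 | hg30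
      · right
        constructor
        · refine mem_congr d3 (fun t => ?_)
          rcases btwo (t 0) with h | h <;> rw [h]
          · exact hg30
          · exact hg31
        · refine mem_congr d2 (fun t => ?_)
          rcases btwo (t 0) with h | h <;> rw [h]
          · exact hg20
          · exact hg21
      · left
        refine mem_congr d3 (fun t => ?_)
        rcases btwo (t 0) with h | h <;> rw [h]
        · rw [hg30]; decide
        · rw [hg31]; decide
  rcases step1 with hneg | ⟨h0, h1⟩
  · -- have negation; get a constant from g4
    obtain ⟨x, hx⟩ := p4
    have hx' : g4 (fun i => x i + 1) = g4 x := bne_succ _ _ hx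
    have hu : (⟨0, fun t => g4 (fun j => if x j = 1 then t 0 else t 0 + 1)⟩ : Ops B) ∈ C := by
      refine hC.2 n4 0 g4 (fun j => fun t => if x j = 1 then t 0 else t 0 + 1) m4 ?_
      intro j
      rcases btwo (x j) with h | h
      · refine mem_congr hneg (fun t => ?_)
        rw [if_neg (by rw [h]; decide)]
      · refine mem_congr (hC.1 0 0) (fun t => ?_)
        rw [if_pos h]
    have huval : ∀ t : Fin 1 → B, g4 (fun j => if x j = 1 then t 0 else t 0 + 1) = g4 x := by
      intro t
      rcases btwo (t 0) with h | h
      · have hv : (fun j => if x j = 1 then t 0 else t 0 + 1) = fun i => x i + 1 := by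
          funext j
          rcases btwo (x j) with hj | hj <;> rw [hj] <;> simp [h] <;> decide
        rw [hv, hx']
      · have hv : (fun j => if x j = 1 then t 0 else t 0 + 1) = x := by
          funext j
          rcases btwo (x j) with hj | hj <;> rw [hj] <;> simp [h] <;> decide
        rw [hv]
    rcases btwo (g4 x) with hv | hv
    · have h0 : (⟨0, fun _ => (0:B)⟩ : Ops B) ∈ C :=
        mem_congr hu (fun t => by rw [huval t, hv])
      refine ⟨hneg, h0, ?_⟩
      refine mem_congr (neg_comp hC hneg h0) (fun t => ?_)
      decide
    · have h1 : (⟨0, fun _ => (1:B)⟩ : Ops B) ∈ C :=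
        mem_congr hu (fun t => by rw [huval t, hv])
      refine ⟨hneg, ?_, h1⟩
      refine mem_congr (neg_comp hC hneg h1) (fun t => ?_)
      decide
  · -- have both constants; get negation from g1
    exact ⟨neg_of_nonmono hC h0 h1 m1 p1, h0, h1⟩

end PostAux
namespace PostAux

variable {C : Set (Ops B)}

def extd {n : ℕ} (x : Fin (n+1) → B) (a : B) : Fin (n+2) → B :=
  fun i => if h : (i : ℕ) < n + 1 then x ⟨i, h⟩ else a

def frontv {n : ℕ} (y : Fin (n+2) → B) : Fin (n+1) → B := fun i => y i.castSucc

lemma extd_front {n : ℕ} (y : Fin (n+2) → B) :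
    extd (frontv y) (y (Fin.last (n+1))) = y := by
  funext i
  by_cases h : (i : ℕ) < n + 1
  · simp only [extd, dif_pos h, frontv]
    exact congrArg y (Fin.ext (by simp))
  · simp only [extd, dif_neg h]
    have hi : i = Fin.last (n+1) := Fin.ext (by have := i.isLt; simp only [Fin.val_last]; omega)
    rw [hi]

lemma frontv_extd {n : ℕ} (x : Fin (n+1) → B) (a : B) : frontv (extd x a) = x := by
  funext j
  have h : ((j.castSucc : Fin (n+2)) : ℕ) < n + 1 := by have := j.isLt; simp; omega
  simp only [frontv, extd, dif_pos h]
  exact congrArg x (Fin.ext (by simp))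

lemma extd_last {n : ℕ} (x : Fin (n+1) → B) (a : B) : extd x a (Fin.last (n+1)) = a := by
  simp only [extd]
  rw [dif_neg (by simp)]

lemma shannon {n : ℕ} (f : (Fin (n+2) → B) → B) (y : Fin (n+2) → B) :
    f y = f (extd (frontv y) 0) +
      y (Fin.last (n+1)) * (f (extd (frontv y) 0) + f (extd (frontv y) 1)) := by
  rcases btwo (y (Fin.last (n+1))) with h | h
  · have he : extd (frontv y) 0 = y := by rw [← h]; exact extd_front y
    rw [he, h]; ring
  · have he : extd (frontv y) 1 = y := by rw [← h]; exact extd_front y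
    rw [he, h]
    have key : ∀ a b : B, b = a + 1 * (a + b) := by decide
    exact key _ _

lemma restrict_mem (hC : IsClone C)
    (h0 : (⟨0, fun _ => (0:B)⟩ : Ops B) ∈ C) (h1 : (⟨0, fun _ => (1:B)⟩ : Ops B) ∈ C)
    {n : ℕ} {f : (Fin (n+2) → B) → B} (hf : (⟨n+1, f⟩ : Ops B) ∈ C) (a : B) :
    (⟨n, fun x => f (extd x a)⟩ : Ops B) ∈ C := by
  have hconst : (⟨n, fun _ => a⟩ : Ops B) ∈ C := by
    rcases btwo a with h | h <;> rw [h]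
    · exact const_mem hC h0 n
    · exact const_mem hC h1 n
  refine mem_congr (hC.2 (n+1) n f
    (fun i => fun x => if h : (i : ℕ) < n + 1 then x ⟨i, h⟩ else a) hf ?_) (fun x => ?_)
  · intro i
    by_cases h : (i : ℕ) < n + 1
    · exact mem_congr (hC.1 n ⟨i, h⟩) (fun x => by rw [dif_pos h])
    · exact mem_congr hconst (fun x => by rw [dif_neg h])
  · rfl

lemma shift_mem (hC : IsClone C) (hneg : (⟨0, fun t => t 0 + 1⟩ : Ops B) ∈ C)
    (k : Fin 2) (e : B) : (⟨1, fun t : Fin 2 → B => t k + e⟩ : Ops B) ∈ C := by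
  rcases btwo e with h | h <;> rw [h]
  · exact mem_congr (hC.1 1 k) (fun t => by rw [add_zero])
  · exact unary_comp hC hneg (hC.1 1 k)

lemma and_of_nonlinear (hC : IsClone C)
    (hneg : (⟨0, fun t => t 0 + 1⟩ : Ops B) ∈ C)
    (h0 : (⟨0, fun _ => (0:B)⟩ : Ops B) ∈ C) (h1 : (⟨0, fun _ => (1:B)⟩ : Ops B) ∈ C) :
    ∀ (n : ℕ) (f : (Fin (n+1) → B) → B), (⟨n, f⟩ : Ops B) ∈ C →
      (¬ ∃ (c : B) (coef : Fin (n+1) → B), ∀ x, f x = c + ∑ i, coef i * x i) →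
      (⟨1, fun t : Fin 2 → B => t 0 * t 1⟩ : Ops B) ∈ C := by
  intro n
  induction n with
  | zero =>
    intro f hf hnl
    exfalso
    refine hnl ⟨f (fun _ => 0), fun _ => f (fun _ => 0) + f (fun _ => 1), fun x => ?_⟩
    have hx : x = fun _ => x 0 := funext fun j => by rw [Fin.fin_one_eq_zero j]
    rw [Fin.sum_univ_one]
    rcases btwo (x 0) with h | h
    · rw [hx]; simp only [h]; ring
    · rw [hx]; simp only [h]
      have key : ∀ a b : B, b = a + (a + b) * 1 := by decide
      exact key _ _
  | succ n ih =>
    intro f hf hnl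
    by_cases lin0 : ∃ (c : B) (coef : Fin (n+1) → B), ∀ x, f (extd x 0) = c + ∑ i, coef i * x i
    case neg => exact ih (fun x => f (extd x 0)) (restrict_mem hC h0 h1 hf 0) lin0
    by_cases lin1 : ∃ (c : B) (coef : Fin (n+1) → B), ∀ x, f (extd x 1) = c + ∑ i, coef i * x i
    case neg => exact ih (fun x => f (extd x 1)) (restrict_mem hC h0 h1 hf 1) lin1
    obtain ⟨c, ce, hc⟩ := lin0
    obtain ⟨d, de, hd⟩ := lin1
    by_cases hcd : ∀ i, ce i = de i
    · exfalso
      refine hnl ⟨c, Fin.lastCases (c + d) ce, fun y => ?_⟩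
      have hc' : ∀ y : Fin (n+2) → B,
          f (extd (frontv y) 0) = c + ∑ i, ce i * y i.castSucc := fun y => hc (frontv y)
      have hd' : ∀ y : Fin (n+2) → B,
          f (extd (frontv y) 1) = d + ∑ i, de i * y i.castSucc := fun y => hd (frontv y)
      rw [shannon f y, hc' y, hd' y,
        Fin.sum_univ_castSucc (f := fun x : Fin (n+2) => Fin.lastCases (c + d) ce x * y x)]
      simp only [Fin.lastCases_last, Fin.lastCases_castSucc]
      have hsum : ∑ i, de i * y i.castSucc = ∑ i, ce i * y i.castSucc :=
        Finset.sum_congr rfl (fun i _ => by rw [hcd i])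
      rw [hsum]
      have key : ∀ c d S L : B, (c + S) + L * ((c + S) + (d + S)) = c + (S + (c + d) * L) := by
        decide
      exact key c d _ _
    · push_neg at hcd
      obtain ⟨i, hi⟩ := hcd
      -- the binary quadratic function Q(u,v) = f (extd (w u) v), w u = u·eᵢ
      have hQmem : (⟨1, fun t : Fin 2 → B =>
          f (extd (fun j => if j = i then t 0 else 0) (t 1))⟩ : Ops B) ∈ C := by
        refine mem_congr (hC.2 (n+1) 1 f
          (fun j => fun t : Fin 2 → B =>
            if h : (j : ℕ) < n + 1 then (if (⟨j, h⟩ : Fin (n+1)) = i then t 0 else 0)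
            else t 1) hf ?_) (fun t => ?_)
        · intro j
          by_cases h : (j : ℕ) < n + 1
          · by_cases hji : (⟨j, h⟩ : Fin (n+1)) = i
            · exact mem_congr (hC.1 1 0) (fun t => by rw [dif_pos h, if_pos hji])
            · exact mem_congr (const_mem hC h0 1)
                (fun t => by rw [dif_pos h, if_neg hji])
          · exact mem_congr (hC.1 1 1) (fun t => by rw [dif_neg h])
        · congr 1
      have hwsum0 : ∀ u : B, f (extd (fun j => if j = i then u else 0) 0) = c + ce i * u := by
        intro u
        rw [hc (fun j => if j = i then u else 0)]
        congr 1
        rw [Finset.sum_eq_single i (fun b _ hb => by rw [if_neg hb, mul_zero])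
          (fun hb => absurd (Finset.mem_univ i) hb), if_pos rfl]
      have hwsum1 : ∀ u : B, f (extd (fun j => if j = i then u else 0) 1) = d + de i * u := by
        intro u
        rw [hd (fun j => if j = i then u else 0)]
        congr 1
        rw [Finset.sum_eq_single i (fun b _ hb => by rw [if_neg hb, mul_zero])
          (fun hb => absurd (Finset.mem_univ i) hb), if_pos rfl]
      have hQval : ∀ u v : B, f (extd (fun j => if j = i then u else 0) v) =
          (c + ce i * u) + v * ((c + ce i * u) + (d + de i * u)) := by
        intro u v
        rw [shannon f (extd (fun j => if j = i then u else 0) v), frontv_extd, extd_last,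
          hwsum0 u, hwsum1 u]
      -- shift the two variables
      have hS : (⟨1, fun t : Fin 2 → B =>
          f (extd (fun j => if j = i then t 0 + (c + d) else 0) (t 1 + ce i))⟩ : Ops B) ∈ C := by
        refine mem_congr (hC.2 1 1
          (fun t : Fin 2 → B => f (extd (fun j => if j = i then t 0 else 0) (t 1)))
          (fun k => fun t : Fin 2 → B => t k + ![c + d, ce i] k) hQmem
          (fun k => shift_mem hC hneg k _)) (fun t => ?_)
        norm_num
      -- add the right constant
      have hSa : (⟨1, fun t : Fin 2 → B =>
          f (extd (fun j => if j = i then t 0 + (c + d) else 0) (t 1 + ce i)) +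
            ((c + ce i * (c + d)) + ce i * ((c + ce i * (c + d)) + (d + de i * (c + d))))⟩ :
          Ops B) ∈ C := by
        rcases btwo ((c + ce i * (c + d)) + ce i * ((c + ce i * (c + d)) + (d + de i * (c + d))))
          with h | h
        · exact mem_congr hS (fun t => by rw [h, add_zero])
        · exact mem_congr (unary_comp hC hneg hS) (fun t => by rw [h])
      refine mem_congr hSa (fun t => ?_)
      rw [hQval (t 0 + (c + d)) (t 1 + ce i)]
      have key : ∀ cc dd α δ u v : B, α ≠ δ →
          (((cc + α * (u + (cc + dd))) + (v + α) *
              ((cc + α * (u + (cc + dd))) + (dd + δ * (u + (cc + dd))))) +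
            ((cc + α * (cc + dd)) + α * ((cc + α * (cc + dd)) + (dd + δ * (cc + dd))))) =
            u * v := by decide
      exact key c d (ce i) (de i) (t 0) (t 1) hi

end PostAux
namespace PostAux

variable {C : Set (Ops B)}

lemma all_mem (hC : IsClone C) (hneg : (⟨0, fun t => t 0 + 1⟩ : Ops B) ∈ C)
    (h0 : (⟨0, fun _ => (0:B)⟩ : Ops B) ∈ C) (h1 : (⟨0, fun _ => (1:B)⟩ : Ops B) ∈ C)
    (hand : (⟨1, fun t : Fin 2 → B => t 0 * t 1⟩ : Ops B) ∈ C) :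
    ∀ (n : ℕ) (f : (Fin (n+1) → B) → B), (⟨n, f⟩ : Ops B) ∈ C := by
  intro n
  induction n with
  | zero =>
    intro f
    have hx : ∀ t : Fin 1 → B, t = fun _ => t 0 :=
      fun t => funext fun j => by rw [Fin.fin_one_eq_zero j]
    rcases btwo (f (fun _ => 0)) with ha | ha <;> rcases btwo (f (fun _ => 1)) with hb | hb
    · refine mem_congr h0 (fun t => ?_)
      rw [hx t]
      rcases btwo (t 0) with h | h <;> simp only [h]
      · exact ha.symm
      · exact hb.symm
    · refine mem_congr (hC.1 0 0) (fun t => ?_)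
      rw [hx t]
      rcases btwo (t 0) with h | h <;> simp only [h]
      · exact ha.symm
      · exact hb.symm
    · refine mem_congr hneg (fun t => ?_)
      rw [hx t]
      rcases btwo (t 0) with h | h <;> simp only [h]
      · rw [ha]; decide
      · rw [hb]; decide
    · refine mem_congr h1 (fun t => ?_)
      rw [hx t]
      rcases btwo (t 0) with h | h <;> simp only [h]
      · exact ha.symm
      · exact hb.symm
  | succ n ih =>
    intro f
    have hA : (⟨n+1, fun y => f (extd (frontv y) 0)⟩ : Ops B) ∈ C :=
      hC.2 n (n+1) (fun x => f (extd x 0)) (fun i => fun y => y i.castSucc)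
        (ih _) (fun i => hC.1 (n+1) i.castSucc)
    have hB : (⟨n+1, fun y => f (extd (frontv y) 1)⟩ : Ops B) ∈ C :=
      hC.2 n (n+1) (fun x => f (extd x 1)) (fun i => fun y => y i.castSucc)
        (ih _) (fun i => hC.1 (n+1) i.castSucc)
    have hL : (⟨n+1, fun y => y (Fin.last (n+1))⟩ : Ops B) ∈ C := hC.1 (n+1) (Fin.last (n+1))
    have hnL := neg_comp hC hneg hL
    have t1 := mul_mem hC hand hA hnL
    have t2 := mul_mem hC hand hB hL
    have n1 := neg_comp hC hneg t1
    have n2 := neg_comp hC hneg t2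
    have t3 := mul_mem hC hand n1 n2
    have t4 := neg_comp hC hneg t3
    refine mem_congr t4 (fun y => ?_)
    rw [shannon f y]
    have key : ∀ a b l : B, (a * (l + 1) + 1) * (b * l + 1) + 1 = a + l * (a + b) := by decide
    exact key _ _ _

end PostAux

/-- **Post's Completeness Theorem.**  A set `F` of Boolean functions (operations on the
two-element set, here `ZMod 2`) is complete if and only if `F` contains a function `f₁`
that is not monotone with respect to the order `0 ≤ 1`, a function `f₂` not fixing `0`,
a function `f₃` not fixing `1`, a function `f₄` that is not self-dual, and a function
`f₅` that is not linear over the two-element field. -/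
theorem post_completeness (F : Set (Ops (ZMod 2))) :
    cloneGen F = Set.univ ↔
      ((∃ f ∈ F, ¬ ∀ x y : Fin (f.1 + 1) → ZMod 2,
          (∀ i, BoolLe (x i) (y i)) → BoolLe (f.2 x) (f.2 y)) ∧
      (∃ f ∈ F, f.2 (fun _ => 0) ≠ 0) ∧
      (∃ f ∈ F, f.2 (fun _ => 1) ≠ 1) ∧
      (∃ f ∈ F, ∃ x : Fin (f.1 + 1) → ZMod 2, f.2 (fun i => x i + 1) ≠ f.2 x + 1) ∧
      (∃ f ∈ F, ¬ ∃ (c : ZMod 2) (coef : Fin (f.1 + 1) → ZMod 2),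
          ∀ x : Fin (f.1 + 1) → ZMod 2, f.2 x = c + ∑ i, coef i * x i)) := by
  constructor
  · intro hgen
    have hsub : ∀ S : Set (Ops (ZMod 2)), IsClone S → F ⊆ S → S = Set.univ := by
      intro S hS hFS
      have hsb : cloneGen F ⊆ S := Set.sInter_subset_of_mem ⟨hS, hFS⟩
      rw [hgen] at hsb
      exact Set.eq_univ_of_univ_subset hsb
    refine ⟨?_, ?_, ?_, ?_, ?_⟩
    · by_contra h
      push_neg at h
      have hF : F ⊆ PostAux.MonoC := fun f hf => h f hf
      have hu := hsub _ PostAux.isClone_MonoC hF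
      exact PostAux.neg_not_mono (hu ▸ Set.mem_univ _)
    · by_contra h
      push_neg at h
      have hF : F ⊆ PostAux.T0C := fun f hf => h f hf
      have hu := hsub _ PostAux.isClone_T0C hF
      exact PostAux.c1_not_T0 (hu ▸ Set.mem_univ _)
    · by_contra h
      push_neg at h
      have hF : F ⊆ PostAux.T1C := fun f hf => h f hf
      have hu := hsub _ PostAux.isClone_T1C hF
      exact PostAux.c0_not_T1 (hu ▸ Set.mem_univ _)
    · by_contra h
      push_neg at h
      have hF : F ⊆ PostAux.SDC := fun f hf => h f hf
      have hu := hsub _ PostAux.isClone_SDC hF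
      exact PostAux.c0_not_SD (hu ▸ Set.mem_univ _)
    · by_contra h
      push_neg at h
      have hF : F ⊆ PostAux.LinC := fun f hf => h f hf
      have hu := hsub _ PostAux.isClone_LinC hF
      exact PostAux.and_not_Lin (hu ▸ Set.mem_univ _)
  · rintro ⟨⟨f1, hf1, p1⟩, ⟨f2, hf2, p2⟩, ⟨f3, hf3, p3⟩, ⟨f4, hf4, p4⟩, ⟨f5, hf5, p5⟩⟩
    have hC := PostAux.isClone_cloneGen F
    have hFC := PostAux.subset_cloneGen F
    have m1 : (⟨f1.1, f1.2⟩ : Ops (ZMod 2)) ∈ cloneGen F := by rw [Sigma.eta]; exact hFC hf1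
    have m2 : (⟨f2.1, f2.2⟩ : Ops (ZMod 2)) ∈ cloneGen F := by rw [Sigma.eta]; exact hFC hf2
    have m3 : (⟨f3.1, f3.2⟩ : Ops (ZMod 2)) ∈ cloneGen F := by rw [Sigma.eta]; exact hFC hf3
    have m4 : (⟨f4.1, f4.2⟩ : Ops (ZMod 2)) ∈ cloneGen F := by rw [Sigma.eta]; exact hFC hf4
    have m5 : (⟨f5.1, f5.2⟩ : Ops (ZMod 2)) ∈ cloneGen F := by rw [Sigma.eta]; exact hFC hf5
    obtain ⟨hneg, h0, h1⟩ := PostAux.neg_and_consts hC m1 p1 m2 p2 m3 p3 m4 p4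
    have hand := PostAux.and_of_nonlinear hC hneg h0 h1 f5.1 f5.2 m5 p5
    have hall := PostAux.all_mem hC hneg h0 h1 hand
    apply Set.eq_univ_of_forall
    intro f
    have hm := hall f.1 f.2
    rwa [Sigma.eta] at hm
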